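/- Let G be the graph on vertices x₁,…,x₇ obtained as the union of the complete graph on {x₁,x₂,x₃,x₄} and the complete graph on {x₁,x₅,x₆,x₇}, together with one additional edge joining x₂ and x₅. Then G contains a separator consisting of one vertex and one edge (namely, deleting the vertex x₁ and the edge x₂x₅ disconnects G), and yet between any pair of distinct vertices of G there exist three edge-disjoint paths of which two are internally disjoint. -/
import Mathlib


/-- A multigraph on vertex type `V` with edges drawn from `E`: each edge `e` in the
edge set joins the two (distinct) vertices of `ends e`.  Parallel edges are allowed,
loops are not. -/
structure Multigraph (V : Type) (E : Type) where
  edgeSet : Set E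
  ends : E → Sym2 V
  no_loops : ∀ e ∈ edgeSet, ¬ (ends e).IsDiag

namespace Multigraph

variable {V E : Type}

/-- Walks in a multigraph. -/
inductive Walk (G : Multigraph V E) : V → V → Type
  | nil (v : V) : Walk G v v
  | cons {u v w : V} (e : E) (he : e ∈ G.edgeSet) (huv : G.ends e = s(u, v))
      (p : Walk G v w) : Walk G u w

namespace Walk

variable {G : Multigraph V E}

/-- The list of vertices visited by a walk. -/
def support : {u v : V} → G.Walk u v → List V
  | u, _, .nil _ => [u]
  | u, _, .cons _ _ _ p => u :: p.support

/-- The list of edges used by a walk. -/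
def edges : {u v : V} → G.Walk u v → List E
  | _, _, .nil _ => []
  | _, _, .cons e _ _ p => e :: p.edges

/-- A walk is a path if it visits no vertex twice. -/
def IsPath {u v : V} (p : G.Walk u v) : Prop := p.support.Nodup

end Walk

/-- Two walks are edge-disjoint if they share no edge. -/
def EdgeDisjoint {G : Multigraph V E} {u₁ v₁ u₂ v₂ : V}
    (p : G.Walk u₁ v₁) (q : G.Walk u₂ v₂) : Prop :=
  ∀ e, e ∈ p.edges → e ∉ q.edges

/-- Two `s`-`t` walks are internally disjoint if they share no vertices other
than `s` and `t`. -/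
def InternallyDisjoint {G : Multigraph V E} {s t : V}
    (p q : G.Walk s t) : Prop :=
  ∀ v, v ∈ p.support → v ∈ q.support → v = s ∨ v = t


end Multigraph

/-- The edges of the counterexample graph: the union of the complete graphs on
`{x₁, x₂, x₃, x₄} = {0, 1, 2, 3}` and `{x₁, x₅, x₆, x₇} = {0, 4, 5, 6}` together with
the extra edge `x₂x₅ = s(1, 4)`. -/
def exEdges : Set (Sym2 (Fin 7)) :=
  {s(0, 1), s(0, 2), s(0, 3), s(1, 2), s(1, 3), s(2, 3),
    s(0, 4), s(0, 5), s(0, 6), s(4, 5), s(4, 6), s(5, 6), s(1, 4)}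

/-- The counterexample graph of Sadeghi and Fan's claim, as a (simple) multigraph. -/
def exGraph : Multigraph (Fin 7) (Sym2 (Fin 7)) where
  edgeSet := exEdges
  ends := id
  no_loops := by
    intro e he
    simp only [exEdges, Set.mem_insert_iff, Set.mem_singleton_iff] at he
    rcases he with rfl | rfl | rfl | rfl | rfl | rfl | rfl | rfl | rfl | rfl | rfl | rfl | rfl <;>
      decide

section Helpers

open Multigraph

/-- The edges of the counterexample graph as a list. -/
def exEdgesList : List (Sym2 (Fin 7)) :=
  [s(0, 1), s(0, 2), s(0, 3), s(1, 2), s(1, 3), s(2, 3),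
    s(0, 4), s(0, 5), s(0, 6), s(4, 5), s(4, 6), s(5, 6), s(1, 4)]

lemma mem_exEdges_of_list {e : Sym2 (Fin 7)} (h : e ∈ exEdgesList) : e ∈ exGraph.edgeSet := by
  show e ∈ exEdges
  simp only [exEdgesList, List.mem_cons, List.not_mem_nil, or_false] at h
  simp only [exEdges, Set.mem_insert_iff, Set.mem_singleton_iff]
  tauto

lemma mem_exEdgesList_of_mem {e : Sym2 (Fin 7)} (h : e ∈ exGraph.edgeSet) : e ∈ exEdgesList := by
  have h' : e ∈ exEdges := h
  simp only [exEdges, Set.mem_insert_iff, Set.mem_singleton_iff] at h'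
  simp only [exEdgesList, List.mem_cons, List.not_mem_nil, or_false]
  tauto

/-- Validity check: starting from `u`, following the list `l` of successive vertices,
every step is an edge, and we end at `v`. -/
def ok : Fin 7 → List (Fin 7) → Fin 7 → Bool
  | u, [], v => u == v
  | u, w :: l, v => (decide (s(u, w) ∈ exEdgesList)) && ok w l v

/-- The edges traversed along such a vertex list. -/
def elist : Fin 7 → List (Fin 7) → List (Sym2 (Fin 7))
  | _, [] => []
  | u, w :: l => s(u, w) :: elist w l

def castW {u v v' : Fin 7} (h : v = v') (p : exGraph.Walk u v) : exGraph.Walk u v' := h ▸ p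

lemma castW_support {u v v' : Fin 7} (h : v = v') (p : exGraph.Walk u v) :
    (castW h p).support = p.support := by subst h; rfl

lemma castW_edges {u v v' : Fin 7} (h : v = v') (p : exGraph.Walk u v) :
    (castW h p).edges = p.edges := by subst h; rfl

def mkWalk : (u : Fin 7) → (l : List (Fin 7)) → (v : Fin 7) → ok u l v = true → exGraph.Walk u v
  | u, [], v, h => castW (by simpa [ok] using h) (.nil u)
  | u, w :: l, v, h => by
      rw [ok, Bool.and_eq_true, decide_eq_true_eq] at h
      exact .cons s(u, w) (mem_exEdges_of_list h.1) rfl (mkWalk w l v h.2)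

lemma mkWalk_support : ∀ (l : List (Fin 7)) (u v : Fin 7) (h : ok u l v = true),
    (mkWalk u l v h).support = u :: l := by
  intro l
  induction l with
  | nil => intro u v h; simp [mkWalk, castW_support, Walk.support]
  | cons w l ih => intro u v h; simp [mkWalk, Walk.support, ih]

lemma mkWalk_edges : ∀ (l : List (Fin 7)) (u v : Fin 7) (h : ok u l v = true),
    (mkWalk u l v h).edges = elist u l := by
  intro l
  induction l with
  | nil => intro u v h; simp [mkWalk, castW_edges, Walk.edges, elist]
  | cons w l ih => intro u v h; simp [mkWalk, Walk.edges, elist, ih]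

/-- Internal-vertex-plus-endpoint lists of the three paths, for `u < v`. -/
def T0 : Fin 7 → Fin 7 → Fin 3 → List (Fin 7)
  | 0, 1, i => [[1], [2, 1], [3, 1]].get i
  | 0, 2, i => [[2], [1, 2], [3, 2]].get i
  | 0, 3, i => [[3], [1, 3], [2, 3]].get i
  | 0, 4, i => [[4], [5, 4], [6, 4]].get i
  | 0, 5, i => [[5], [4, 5], [6, 5]].get i
  | 0, 6, i => [[6], [4, 6], [5, 6]].get i
  | 1, 2, i => [[2], [3, 2], [0, 2]].get i
  | 1, 3, i => [[3], [2, 3], [0, 3]].get i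
  | 1, 4, i => [[4], [0, 4], [2, 0, 5, 4]].get i
  | 1, 5, i => [[4, 5], [0, 5], [3, 0, 6, 5]].get i
  | 1, 6, i => [[4, 6], [0, 6], [2, 0, 5, 6]].get i
  | 2, 3, i => [[3], [1, 3], [0, 3]].get i
  | 2, 4, i => [[1, 4], [0, 4], [3, 0, 5, 4]].get i
  | 2, 5, i => [[1, 4, 5], [0, 5], [3, 1, 0, 6, 5]].get i
  | 2, 6, i => [[1, 4, 6], [0, 6], [3, 0, 5, 6]].get i
  | 3, 4, i => [[1, 4], [0, 4], [2, 0, 5, 4]].get i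
  | 3, 5, i => [[1, 4, 5], [0, 5], [2, 0, 6, 5]].get i
  | 3, 6, i => [[1, 4, 6], [0, 6], [2, 0, 5, 6]].get i
  | 4, 5, i => [[5], [6, 5], [0, 5]].get i
  | 4, 6, i => [[6], [5, 6], [0, 6]].get i
  | 5, 6, i => [[6], [4, 6], [0, 6]].get i
  | _, _, _ => []

/-- Path table for all ordered pairs: for `u > v` reverse the `v`-to-`u` path. -/
def T (u v : Fin 7) (i : Fin 3) : List (Fin 7) :=
  if u < v then T0 u v i else ((v :: T0 v u i).reverse).tail

theorem key_ok : ∀ u v : Fin 7, u ≠ v → ∀ i : Fin 3, ok u (T u v i) v = true := by decide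

theorem key_nodup : ∀ u v : Fin 7, u ≠ v → ∀ i : Fin 3, (u :: T u v i).Nodup := by decide

theorem key_disj : ∀ u v : Fin 7, u ≠ v → ∀ i j : Fin 3, i ≠ j →
    ∀ e ∈ elist u (T u v i), e ∉ elist u (T u v j) := by decide

theorem key_int : ∀ u v : Fin 7, u ≠ v →
    ∀ x ∈ u :: T u v 0, x ∈ u :: T u v 1 → x = u ∨ x = v := by decide

lemma start_mem_support {a b : Fin 7} (p : exGraph.Walk a b) : a ∈ p.support := by
  cases p <;> simp [Walk.support]

theorem step_lemma : ∀ u v : Fin 7, s(u, v) ∈ exEdgesList →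
    u ∈ ([1, 2, 3] : List (Fin 7)) → s(u, v) ≠ s((1 : Fin 7), (4 : Fin 7)) → v ≠ 0 →
    v ∈ ([1, 2, 3] : List (Fin 7)) := by decide

theorem no_escape : ∀ {a b : Fin 7} (p : exGraph.Walk a b),
    (∀ x ∈ p.support, x ≠ (0 : Fin 7)) →
    (∀ e ∈ p.edges, e ≠ s((1 : Fin 7), (4 : Fin 7))) →
    a ∈ ([1, 2, 3] : List (Fin 7)) → b ∈ ([1, 2, 3] : List (Fin 7)) := by
  intro a b p
  induction p with
  | nil v => exact fun _ _ h => h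
  | @cons u v w e he huv q ih =>
    intro h0 hs ha
    apply ih
    · intro x hx; exact h0 x (by simp [Walk.support, hx])
    · intro f hf; exact hs f (by simp [Walk.edges, hf])
    · have heq : e = s(u, v) := huv
      have hel : e ∈ exEdgesList := mem_exEdgesList_of_mem he
      have hne : e ≠ s((1 : Fin 7), (4 : Fin 7)) := hs e (by simp [Walk.edges])
      have hv0 : v ≠ 0 := h0 v (by simp [Walk.support, start_mem_support q])
      subst heq
      exact step_lemma u v hel ha hne hv0

end Helpers

open Multigraph in
/-- In the counterexample graph, deleting the vertex `x₁ = 0` and the edge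
`x₂x₅ = s(1, 4)` disconnects the graph; nevertheless between any two distinct vertices
there are three edge-disjoint paths of which two are internally disjoint. -/
theorem counterexample_has_paths :
    (∃ u v : Fin 7, u ≠ 0 ∧ v ≠ 0 ∧
      ¬ ∃ p : exGraph.Walk u v, (∀ x ∈ p.support, x ≠ (0 : Fin 7)) ∧
        ∀ e ∈ p.edges, e ≠ s((1 : Fin 7), (4 : Fin 7))) ∧
    ∀ u v : Fin 7, u ≠ v →
      ∃ P : Fin 3 → exGraph.Walk u v, (∀ i, (P i).IsPath) ∧
        (∀ i j, i ≠ j → EdgeDisjoint (P i) (P j)) ∧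
        ∃ i j, i ≠ j ∧ InternallyDisjoint (P i) (P j) := by
  constructor
  · refine ⟨1, 4, by decide, by decide, ?_⟩
    rintro ⟨p, h0, he⟩
    exact absurd (no_escape p h0 he (by decide)) (by decide)
  · intro u v huv
    refine ⟨fun i => mkWalk u (T u v i) v (key_ok u v huv i), ?_, ?_, ?_⟩
    · intro i
      show (mkWalk u (T u v i) v (key_ok u v huv i)).support.Nodup
      rw [mkWalk_support]
      exact key_nodup u v huv i
    · intro i j hij e hei hej
      rw [mkWalk_edges] at hei hej
      exact key_disj u v huv i j hij e hei hej
    · refine ⟨0, 1, by decide, fun x hx hx' => ?_⟩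
      rw [mkWalk_support] at hx hx'
      exact key_int u v huv x hx hx'
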